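/- (Theorem 4.2) Fix integers m ≥ 1 and k₁, …, k_m ≥ 1 and fix m mutually distinct complex numbers Λ₁, …, Λ_m. For every δ > 0 there exists ε₀ > 0 such that: whenever λ_{ij} (i = 1, …, m; j = 1, …, kᵢ) are mutually distinct complex numbers with |λ_{ij} − Λᵢ| < ε₀ for all i, j, there exist functions f_{ij} (i = 1, …, m; j = 1, …, kᵢ), each belonging to the span of the exponential functions e^{λ_{ij} x} in L²([−π, π]), such that ‖f_{ij}(x) − x^{j−1} e^{Λᵢ x}‖_{L²([−π,π])} < δ for all i = 1, …, m and j = 1, …, kᵢ. -/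

import Mathlib

open MeasureTheory

open Nat Function

noncomputable def hc : ℕ → List ℂ → ℂ
  | 0, _ => 1
  | _+1, [] => 0
  | d+1, x :: L => x * hc d (x :: L) + hc (d+1) L
termination_by d L => (d, L.length)

@[simp] lemma hc_zero (L : List ℂ) : hc 0 L = 1 := by simp [hc]
@[simp] lemma hc_nil (d : ℕ) : hc (d+1) [] = 0 := by simp [hc]
lemma hc_cons (d : ℕ) (x : ℂ) (L : List ℂ) :
    hc (d+1) (x :: L) = x * hc d (x :: L) + hc (d+1) L := by simp [hc]

@[simp] lemma hc_single (d : ℕ) (x : ℂ) : hc d [x] = x ^ d := by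
  induction d with
  | zero => simp
  | succ d ih => rw [hc_cons, ih, hc_nil]; ring

/-- value on a constant list: binomial coefficient -/
lemma hc_replicate (Λ : ℂ) : ∀ d q : ℕ,
    hc d (List.replicate (q+1) Λ) = (Nat.choose (d+q) q : ℂ) * Λ ^ d := by
  intro d
  induction d with
  | zero => intro q; simp
  | succ d ihd =>
    intro q
    induction q with
    | zero => simp
    | succ q ihq =>
      have hrep : List.replicate (q+2) Λ = Λ :: List.replicate (q+1) Λ := rfl
      rw [hrep, hc_cons, ← hrep, ihd (q+1), ihq]
      have hp : (d+1+(q+1)).choose (q+1) = (d+(q+1)).choose (q+1) + (d+1+q).choose q := by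
        have h1 : d+1+(q+1) = (d + (q+1)) + 1 := by ring
        rw [h1, Nat.choose_succ_succ' (d + (q+1)) q]
        have h3 : d + (q+1) = d + 1 + q := by omega
        rw [h3]
        omega
      rw [hp]
      push_cast
      ring

/-- norm bound -/
lemma hc_bound (M : ℝ) (hM : 0 ≤ M) : ∀ (d : ℕ) (L : List ℂ),
    (∀ x ∈ L, ‖x‖ ≤ M) → ‖hc d L‖ ≤ (L.length * M) ^ d := by
  intro d
  induction d with
  | zero => intro L _; simp
  | succ d ihd =>
    intro L
    induction L with
    | nil => intro _; simp
    | cons x L ihL =>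
      intro hx
      have hxM : ‖x‖ ≤ M := hx x (by simp)
      have hLM : ∀ y ∈ L, ‖y‖ ≤ M := fun y hy => hx y (by simp [hy])
      rw [hc_cons]
      have h1 : ‖x * hc d (x :: L) + hc (d+1) L‖ ≤ M * ((x::L).length * M) ^ d
          + (L.length * M) ^ (d+1) := by
        refine (norm_add_le _ _).trans (add_le_add ?_ (ihL hLM))
        rw [norm_mul]
        exact mul_le_mul hxM (ihd (x::L) hx) (norm_nonneg _) hM
      refine h1.trans ?_
      simp only [List.length_cons]
      push_cast
      set n : ℝ := (L.length : ℝ) with hn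
      have hn0 : 0 ≤ n := by positivity
      have e1 : ((n+1) * M) ^ (d+1) = (n+1)^(d+1) * M^(d+1) := by rw [mul_pow]
      have e2 : (n * M) ^ (d+1) = n^(d+1) * M^(d+1) := by rw [mul_pow]
      have e3 : M * ((n+1) * M) ^ d = (n+1)^d * M^(d+1) := by rw [mul_pow]; ring
      rw [e1, e2, e3, ← add_mul]
      refine mul_le_mul_of_nonneg_right ?_ (by positivity)
      have h4 : n^(d+1) ≤ n * (n+1)^d := by
        rw [_root_.pow_succ']
        exact mul_le_mul_of_nonneg_left (pow_le_pow_left₀ hn0 (by linarith) d) hn0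
      have h5 : (n+1)^(d+1) = (n+1)^d + n*(n+1)^d := by rw [_root_.pow_succ]; ring
      linarith

lemma hc_K (d : ℕ) (x y : ℂ) (L : List ℂ) :
    x * hc d (x :: L) - y * hc d (y :: L) = (x - y) * hc d (x :: y :: L) := by
  induction d generalizing L with
  | zero => simp
  | succ d ih =>
    rw [hc_cons d x L, hc_cons d y L, hc_cons d x (y :: L), hc_cons d y L]
    linear_combination x * ih L

lemma hc_swap (d : ℕ) (x y : ℂ) (L : List ℂ) :
    hc d (x :: y :: L) = hc d (y :: x :: L) := by
  induction d generalizing L with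
  | zero => simp
  | succ d ih =>
    rw [hc_cons d x (y :: L), hc_cons d y (x :: L), hc_cons d y L, hc_cons d x L,
      ih L]
    linear_combination hc_K d y x L

lemma hc_perm (d : ℕ) : ∀ {L L' : List ℂ}, L.Perm L' → hc d L = hc d L' := by
  induction d with
  | zero => intro L L' _; simp
  | succ d ih =>
    intro L L' p
    induction p with
    | nil => rfl
    | cons a p ihp => rw [hc_cons, hc_cons, ih (List.Perm.cons a p), ihp]
    | swap a b l => exact hc_swap _ _ _ _
    | trans p1 p2 ih1 ih2 => rw [ih1, ih2]

def NRel (M ε : ℝ) (a b : ℂ) : Prop := ‖a‖ ≤ M ∧ ‖b‖ ≤ M ∧ ‖a - b‖ ≤ ε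

lemma rel_left {M ε : ℝ} : ∀ {L L' : List ℂ}, List.Forall₂ (NRel M ε) L L' →
    ∀ z ∈ L, ‖z‖ ≤ M := by
  intro L L' h
  induction h with
  | nil => intro z hz; simp at hz
  | cons hxy hll ih =>
    intro z hz
    rcases List.mem_cons.1 hz with rfl | hz
    · exact hxy.1
    · exact ih z hz

lemma hc_diff (M ε : ℝ) (hM : 1 ≤ M) (hε : 0 ≤ ε) : ∀ (d : ℕ) (L L' : List ℂ),
    List.Forall₂ (NRel M ε) L L' →
    ‖hc d L - hc d L'‖ ≤ d * ε * (L.length * M) ^ d := by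
  have hM0 : (0:ℝ) ≤ M := by linarith
  intro d
  induction d with
  | zero => intro L L' _; simp
  | succ d ihd =>
    intro L L' hf
    induction hf with
    | nil => simp
    | @cons x y l l' hxy hll ih2 =>
      have hA : ‖hc d (x::l)‖ ≤ ((x::l).length * M)^d :=
        hc_bound M hM0 d (x::l) (rel_left (List.Forall₂.cons hxy hll))
      have hAB : ‖hc d (x::l) - hc d (y::l')‖ ≤ d * ε * ((x::l).length * M)^d :=
        ihd _ _ (List.Forall₂.cons hxy hll)
      have hPQ : ‖hc (d+1) l - hc (d+1) l'‖ ≤ (d+1) * ε * (l.length * M)^(d+1) := by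
        convert ih2 using 2
        push_cast
        ring
      rw [hc_cons, hc_cons]
      have decomp : x * hc d (x::l) + hc (d+1) l - (y * hc d (y::l') + hc (d+1) l')
          = (x - y) * hc d (x::l) + y * (hc d (x::l) - hc d (y::l'))
            + (hc (d+1) l - hc (d+1) l') := by ring
      rw [decomp]
      have step1 : ‖(x - y) * hc d (x::l) + y * (hc d (x::l) - hc d (y::l'))
            + (hc (d+1) l - hc (d+1) l')‖
          ≤ ε * ((x::l).length * M)^d + M * (d * ε * ((x::l).length * M)^d)
            + (d+1) * ε * (l.length * M)^(d+1) := by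
        refine (norm_add_le _ _).trans (add_le_add ((norm_add_le _ _).trans
          (add_le_add ?_ ?_)) hPQ)
        · rw [norm_mul]
          exact mul_le_mul hxy.2.2 hA (norm_nonneg _) hε
        · rw [norm_mul]
          exact mul_le_mul hxy.2.1 hAB (norm_nonneg _) hM0
      refine step1.trans ?_
      simp only [List.length_cons]
      push_cast
      set n : ℝ := (l.length : ℝ) with hn
      have hn0 : 0 ≤ n := by positivity
      -- arithmetic
      have key1 : ε * ((n+1) * M)^d + M * (d * ε * ((n+1) * M)^d)
          = (1 + d * M) * (ε * ((n+1)*M)^d) := by ring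
      have key2 : (1 + d * M) ≤ (d+1) * M := by nlinarith [Nat.cast_nonneg (α := ℝ) d]
      have hpos : (0:ℝ) ≤ ε * ((n+1)*M)^d := by positivity
      have key3 : (1 + d * M) * (ε * ((n+1)*M)^d) ≤ ((d:ℝ)+1) * M * (ε * ((n+1)*M)^d) :=
        mul_le_mul_of_nonneg_right key2 hpos
      have key4 : (n*M)^(d+1) ≤ n * ((n+1)*M)^d * M := by
        have h1 : (n*M)^(d+1) = n^(d+1) * M^(d+1) := by rw [mul_pow]
        have h2 : n * ((n+1)*M)^d * M = n * (n+1)^d * M^(d+1) := by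
          rw [mul_pow]; ring
        rw [h1, h2]
        have h3 : n^(d+1) ≤ n * (n+1)^d := by
          rw [_root_.pow_succ']
          exact mul_le_mul_of_nonneg_left (pow_le_pow_left₀ hn0 (by linarith) d) hn0
        exact mul_le_mul_of_nonneg_right h3 (by positivity)
      have key5 : ((d:ℝ)+1) * ε * (n*M)^(d+1) ≤ ((d:ℝ)+1) * ε * (n * ((n+1)*M)^d * M) := by
        refine mul_le_mul_of_nonneg_left key4 (by positivity)
      have keyF : ((d:ℝ)+1) * M * (ε * ((n+1)*M)^d) + ((d:ℝ)+1) * ε * (n * ((n+1)*M)^d * M)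
          = ((d:ℝ)+1) * ε * ((n+1)*M)^(d+1) := by
        rw [_root_.pow_succ]; ring
      linarith

noncomputable def cf {q : ℕ} (μ : Fin q → ℂ) (k : Fin q) : ℂ :=
  ∏ l, if l = k then 1 else (μ k - μ l)⁻¹

noncomputable def Sdd (r : ℕ) {q : ℕ} (μ : Fin q → ℂ) : ℂ :=
  ∑ k, μ k ^ r * cf μ k

lemma cf_succ (n : ℕ) (μ : Fin (n+2) → ℂ) (j : Fin (n+1)) :
    cf μ j.succ = (μ j.succ - μ 0)⁻¹ * cf (μ ∘ Fin.succ) j := by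
  rw [cf, Fin.prod_univ_succ]
  have h0 : (if (0 : Fin (n+2)) = j.succ then (1:ℂ) else (μ j.succ - μ 0)⁻¹)
      = (μ j.succ - μ 0)⁻¹ := if_neg (Fin.succ_ne_zero j).symm
  rw [h0, cf]
  congr 1
  apply Finset.prod_congr rfl
  intro l _
  simp [Fin.succ_inj, Function.comp]

lemma cf_castSucc (n : ℕ) (μ : Fin (n+2) → ℂ) (j : Fin (n+1)) :
    cf μ j.castSucc = (μ j.castSucc - μ (Fin.last (n+1)))⁻¹ * cf (μ ∘ Fin.castSucc) j := by
  rw [cf, Fin.prod_univ_castSucc, mul_comm]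
  have h0 : (if Fin.last (n+1) = j.castSucc then (1:ℂ)
      else (μ j.castSucc - μ (Fin.last (n+1)))⁻¹)
      = (μ j.castSucc - μ (Fin.last (n+1)))⁻¹ := if_neg (Fin.castSucc_lt_last j).ne'
  rw [h0, cf]
  congr 1
  apply Finset.prod_congr rfl
  intro l _
  simp [Fin.castSucc_inj, Function.comp]

lemma Sdd_tail (n r : ℕ) (μ : Fin (n+2) → ℂ) (hμ : Function.Injective μ) :
    Sdd r (μ ∘ Fin.succ) = ∑ k : Fin (n+2), (μ k - μ 0) * (μ k ^ r * cf μ k) := by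
  rw [Fin.sum_univ_succ (f := fun k => (μ k - μ 0) * (μ k ^ r * cf μ k)),
    sub_self, zero_mul, zero_add, Sdd]
  apply Finset.sum_congr rfl
  intro j _
  rw [cf_succ n μ j]
  have hne : μ j.succ - μ 0 ≠ 0 := sub_ne_zero.2 (fun h => (Fin.succ_ne_zero j) (hμ h))
  simp only [Function.comp]
  field_simp

lemma Sdd_init (n r : ℕ) (μ : Fin (n+2) → ℂ) (hμ : Function.Injective μ) :
    Sdd r (μ ∘ Fin.castSucc) = ∑ k : Fin (n+2), (μ k - μ (Fin.last (n+1))) * (μ k ^ r * cf μ k) := by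
  rw [Fin.sum_univ_castSucc (f := fun k => (μ k - μ (Fin.last (n+1))) * (μ k ^ r * cf μ k)),
    sub_self, zero_mul, add_zero, Sdd]
  apply Finset.sum_congr rfl
  intro j _
  rw [cf_castSucc n μ j]
  have hne : μ j.castSucc - μ (Fin.last (n+1)) ≠ 0 :=
    sub_ne_zero.2 (fun h => (Fin.castSucc_lt_last j).ne (hμ h))
  simp only [Function.comp]
  field_simp

lemma Sdd_rec (n r : ℕ) (μ : Fin (n+2) → ℂ) (hμ : Function.Injective μ) :
    Sdd r (μ ∘ Fin.succ) - Sdd r (μ ∘ Fin.castSucc)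
      = (μ (Fin.last (n+1)) - μ 0) * Sdd r μ := by
  rw [Sdd_tail n r μ hμ, Sdd_init n r μ hμ, ← Finset.sum_sub_distrib, Sdd, Finset.mul_sum]
  apply Finset.sum_congr rfl
  intro k _
  ring

lemma ofFn_perm_last (n : ℕ) (μ : Fin (n+2) → ℂ) :
    (List.ofFn μ).Perm (μ (Fin.last (n+1)) :: List.ofFn (μ ∘ Fin.castSucc)) := by
  rw [List.ofFn_succ', List.concat_eq_append]
  exact List.perm_append_comm.trans (by simp [Function.comp])

lemma hc_tail_init (n d : ℕ) (μ : Fin (n+2) → ℂ) :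
    hc (d+1) (List.ofFn (μ ∘ Fin.succ)) - hc (d+1) (List.ofFn (μ ∘ Fin.castSucc))
      = (μ (Fin.last (n+1)) - μ 0) * hc d (List.ofFn μ) := by
  have h1 : hc (d+1) (List.ofFn μ)
      = μ 0 * hc d (List.ofFn μ) + hc (d+1) (List.ofFn (μ ∘ Fin.succ)) := by
    rw [List.ofFn_succ]
    exact hc_cons d (μ 0) _
  have hperm := ofFn_perm_last n μ
  have h2 : hc (d+1) (List.ofFn μ)
      = μ (Fin.last (n+1)) * hc d (List.ofFn μ) + hc (d+1) (List.ofFn (μ ∘ Fin.castSucc)) := by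
    rw [hc_perm (d+1) hperm, hc_cons, ← hc_perm d hperm]
  linear_combination h2 - h1

lemma Sdd_eq_hc : ∀ (n : ℕ) (μ : Fin (n+1) → ℂ), Function.Injective μ → ∀ r : ℕ,
    Sdd r μ = if n ≤ r then hc (r - n) (List.ofFn μ) else 0 := by
  intro n
  induction n with
  | zero =>
    intro μ _ r
    simp [Sdd, cf]
  | succ n ih =>
    intro μ hμ r
    have hν : Function.Injective (μ ∘ Fin.succ) := hμ.comp (Fin.succ_injective _)
    have hκ : Function.Injective (μ ∘ Fin.castSucc) := hμ.comp (Fin.castSucc_injective _)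
    have hlne : (Fin.last (n+1)) ≠ (0 : Fin (n+2)) := by
      simp [Fin.ext_iff]
    have hne : μ (Fin.last (n+1)) - μ 0 ≠ 0 := sub_ne_zero.2 (fun h => hlne (hμ h))
    have hrec := Sdd_rec n r μ hμ
    have hSμ : Sdd r μ = (μ (Fin.last (n+1)) - μ 0)⁻¹
        * (Sdd r (μ ∘ Fin.succ) - Sdd r (μ ∘ Fin.castSucc)) := by
      rw [hrec]
      field_simp
    by_cases hr : n + 1 ≤ r
    · obtain ⟨d, rfl⟩ : ∃ d, r = n + 1 + d := ⟨r - (n+1), by omega⟩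
      have e1 : n + 1 + d - n = d + 1 := by omega
      have e2 : n + 1 + d - (n+1) = d := by omega
      rw [hSμ, ih _ hν _, ih _ hκ _, if_pos (by omega : n ≤ n+1+d),
        if_pos (by omega : n ≤ n+1+d), e1, hc_tail_init n d μ, if_pos hr, e2]
      field_simp
    · have hz : Sdd r (μ ∘ Fin.succ) - Sdd r (μ ∘ Fin.castSucc) = 0 := by
        rw [ih _ hν _, ih _ hκ _]
        by_cases h2 : n ≤ r
        · have : r - n = 0 := by omega
          rw [this]
          simp
        · simp [h2]
      rw [hSμ, hz, mul_zero, if_neg hr]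

lemma forall₂_ofFn_replicate {P : ℂ → ℂ → Prop} :
    ∀ (q : ℕ) (μ : Fin q → ℂ) (Λ : ℂ), (∀ k, P (μ k) Λ) →
    List.Forall₂ P (List.ofFn μ) (List.replicate q Λ) := by
  intro q
  induction q with
  | zero => intro μ Λ _; simp
  | succ q ih =>
    intro μ Λ h
    rw [List.ofFn_succ, List.replicate_succ]
    exact List.Forall₂.cons (h 0) (ih (μ ∘ Fin.succ) Λ (fun k => h k.succ))

lemma exp_tsum (z : ℂ) : Complex.exp z = ∑' (r : ℕ), z ^ r / (r ! : ℂ) := by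
  rw [Complex.exp_eq_exp_ℂ, NormedSpace.exp_eq_tsum_div]

lemma exp_summable (z : ℂ) : Summable fun r : ℕ => z ^ r / (r ! : ℂ) :=
  NormedSpace.expSeries_div_summable z

lemma key (n : ℕ) (Λ : ℂ) :
    ∃ C > (0:ℝ), ∀ ε : ℝ, 0 < ε → ε ≤ 1 →
      ∀ μ : Fin (n+1) → ℂ, Function.Injective μ → (∀ k, ‖μ k - Λ‖ ≤ ε) →
      ∀ x : ℝ, |x| ≤ Real.pi →
        ‖(∑ k, ((n ! : ℂ) * cf μ k) * Complex.exp (μ k * x))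
          - (x:ℂ)^n * Complex.exp (Λ * x)‖ ≤ ε * C := by
  have hpi := Real.pi_pos
  set M : ℝ := ‖Λ‖ + 1 with hMdef
  have hM1 : 1 ≤ M := le_add_of_nonneg_left (norm_nonneg Λ)
  have hM0 : 0 ≤ M := by linarith
  set B : ℝ := ((n:ℝ)+1) * M * Real.pi with hBdef
  have hB0 : 0 ≤ B := by positivity
  have hs : Summable (fun d : ℕ => (d:ℝ) * B^d / d !) := by
    rw [← summable_nat_add_iff 1]
    refine Summable.congr ((Real.summable_pow_div_factorial B).mul_left B) ?_
    intro d
    rw [Nat.factorial_succ]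
    push_cast
    have h1 : ((d:ℝ)+1) ≠ 0 := by positivity
    have h2 : ((d !:ℝ)) ≠ 0 := by positivity
    field_simp
    ring
  set K : ℝ := Real.pi^n * ∑' (d : ℕ), (d:ℝ) * B^d / d ! with hKdef
  have hK0 : 0 ≤ K := by
    refine mul_nonneg (by positivity) (tsum_nonneg fun d => by positivity)
  refine ⟨K + 1, by linarith, ?_⟩
  intro ε hε hε1 μ hμ hμΛ x hx
  set Lμ : List ℂ := List.ofFn μ with hLμ
  set LΛ : List ℂ := List.replicate (n+1) Λ with hLΛ
  have hmemμ : ∀ z ∈ Lμ, ‖z‖ ≤ M := by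
    intro z hz
    obtain ⟨k, rfl⟩ := List.mem_ofFn.1 hz
    calc ‖μ k‖ = ‖Λ + (μ k - Λ)‖ := by ring_nf
    _ ≤ ‖Λ‖ + ‖μ k - Λ‖ := norm_add_le _ _
    _ ≤ ‖Λ‖ + 1 := by linarith [hμΛ k]
  have hmemΛ : ∀ z ∈ LΛ, ‖z‖ ≤ M := by
    intro z hz
    rw [List.eq_of_mem_replicate hz]
    linarith
  have hf2 : List.Forall₂ (NRel M ε) Lμ LΛ := by
    refine forall₂_ofFn_replicate (n+1) μ Λ (fun k => ⟨?_, by linarith, hμΛ k⟩)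
    exact hmemμ (μ k) (by rw [hLμ]; exact List.mem_ofFn.2 ⟨k, rfl⟩)
  have hxn : ∀ e : ℕ, ‖(x:ℂ)^e‖ ≤ Real.pi^e := by
    intro e
    rw [norm_pow, Complex.norm_real]
    exact pow_le_pow_left₀ (abs_nonneg x) hx e
  have hfac : ∀ d : ℕ, (n ! : ℝ) * (d ! : ℝ) ≤ ((n+d)! : ℝ) := by
    intro d
    have := Nat.le_of_dvd (Nat.factorial_pos (n+d)) (Nat.factorial_mul_factorial_dvd_factorial_add n d)
    exact_mod_cast this
  set A : ℝ := ((n:ℝ)+1) * M with hAdef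
  have hA0 : 0 ≤ A := by positivity
  have hBA : B = A * Real.pi := by rw [hBdef, hAdef]
  set c : ℕ → ℂ := fun d => (n ! : ℂ) * (x:ℂ)^(n+d) / (((n+d)! : ℕ) : ℂ) with hcdef
  have hcnorm : ∀ d : ℕ, ‖c d‖ ≤ (n ! : ℝ) * Real.pi^(n+d) / (((n+d)! : ℕ) : ℝ) := by
    intro d
    rw [hcdef]
    simp only [norm_div, norm_mul, Complex.norm_natCast]
    apply div_le_div_of_nonneg_right ?_ ?_ |>.trans_eq rfl
    · exact mul_le_mul_of_nonneg_left (hxn (n+d)) (by positivity)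
    · positivity
  have hq : ∀ d : ℕ, (n ! : ℝ) / (((n+d)! : ℕ) : ℝ) ≤ 1 / (d ! : ℝ) := by
    intro d
    rw [div_le_div_iff₀ (by positivity) (by positivity), one_mul]
    exact hfac d
  have harith : ∀ d : ℕ, ((n ! : ℝ) * Real.pi^(n+d) / (((n+d)! : ℕ) : ℝ)) * A^d
      ≤ Real.pi^n * (B^d / d !) := by
    intro d
    have e1 : ((n ! : ℝ) * Real.pi^(n+d) / (((n+d)! : ℕ) : ℝ)) * A^d
        = (Real.pi^n * Real.pi^d * A^d) * ((n ! : ℝ) / (((n+d)! : ℕ) : ℝ)) := by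
      rw [pow_add]; ring
    have e2 : Real.pi^n * (B^d / d !) = (Real.pi^n * Real.pi^d * A^d) * (1 / (d ! : ℝ)) := by
      rw [hBA, mul_pow]; ring
    rw [e1, e2]
    exact mul_le_mul_of_nonneg_left (hq d) (by positivity)
  have hAμ : ∀ d : ℕ, ‖hc d Lμ‖ ≤ A^d := by
    intro d
    have h := hc_bound M hM0 d Lμ hmemμ
    rw [hLμ, List.length_ofFn] at h
    apply h.trans_eq
    rw [hAdef]
    push_cast
    ring_nf
  have hAΛ : ∀ d : ℕ, ‖hc d LΛ‖ ≤ A^d := by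
    intro d
    have h := hc_bound M hM0 d LΛ hmemΛ
    rw [hLΛ, List.length_replicate] at h
    apply h.trans_eq
    rw [hAdef]
    push_cast
    ring_nf
  have hdiff : ∀ d : ℕ, ‖hc d Lμ - hc d LΛ‖ ≤ d * ε * A^d := by
    intro d
    have h := hc_diff M ε hM1 hε.le d Lμ LΛ hf2
    rw [hLμ, List.length_ofFn] at h
    apply h.trans_eq
    rw [hAdef]
    push_cast
    ring_nf
  -- summability of the two series
  have hmaj : Summable (fun d : ℕ => Real.pi^n * (B^d / d !)) := by
    refine Summable.congr ((Real.summable_pow_div_factorial B).mul_left (Real.pi^n)) ?_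
    intro d; rfl
  have hSu : ∀ (L : List ℂ), (∀ d : ℕ, ‖hc d L‖ ≤ A^d) →
      Summable (fun d : ℕ => c d * hc d L) := by
    intro L hL
    apply Summable.of_norm
    refine Summable.of_nonneg_of_le (fun d => norm_nonneg _) ?_ hmaj
    intro d
    rw [norm_mul]
    calc ‖c d‖ * ‖hc d L‖
        ≤ ((n ! : ℝ) * Real.pi^(n+d) / (((n+d)! : ℕ) : ℝ)) * A^d :=
          mul_le_mul (hcnorm d) (hL d) (norm_nonneg _) (by positivity)
      _ ≤ Real.pi^n * (B^d / d !) := harith d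
  have hSuμ := hSu Lμ hAμ
  have hSuΛ := hSu LΛ hAΛ
  -- termwise bound on the difference
  have hterm : ∀ d : ℕ, ‖c d * hc d Lμ - c d * hc d LΛ‖
      ≤ ε * (Real.pi^n * ((d:ℝ) * B^d / d !)) := by
    intro d
    rw [← mul_sub, norm_mul]
    calc ‖c d‖ * ‖hc d Lμ - hc d LΛ‖
        ≤ ((n ! : ℝ) * Real.pi^(n+d) / (((n+d)! : ℕ) : ℝ)) * ((d:ℝ) * ε * A^d) :=
          mul_le_mul (hcnorm d) (hdiff d) (norm_nonneg _) (by positivity)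
      _ = ((d:ℝ) * ε) * (((n ! : ℝ) * Real.pi^(n+d) / (((n+d)! : ℕ) : ℝ)) * A^d) := by ring
      _ ≤ ((d:ℝ) * ε) * (Real.pi^n * (B^d / d !)) :=
          mul_le_mul_of_nonneg_left (harith d) (by positivity)
      _ = ε * (Real.pi^n * ((d:ℝ) * B^d / d !)) := by ring
  have hW : Summable (fun d : ℕ => ε * (Real.pi^n * ((d:ℝ) * B^d / d !))) :=
    ((hs.mul_left (Real.pi^n)).mul_left ε)
  have hnorms : Summable (fun d : ℕ => ‖c d * hc d Lμ - c d * hc d LΛ‖) :=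
    Summable.of_nonneg_of_le (fun d => norm_nonneg _) hterm hW
  -- step 1 : expand the finite sum of exponentials into a power series
  have h1 : (∑ k, ((n ! : ℂ) * cf μ k) * Complex.exp (μ k * x))
      = ∑' (r : ℕ), ((n ! : ℂ) * (x:ℂ)^r / (r ! : ℂ)) * Sdd r μ := by
    have e1 : ∀ k : Fin (n+1), ((n ! : ℂ) * cf μ k) * Complex.exp (μ k * x)
        = ∑' (r : ℕ), ((n ! : ℂ) * cf μ k) * ((μ k * x)^r / (r ! : ℂ)) := by
      intro k
      rw [exp_tsum (μ k * x)]
      exact (tsum_mul_left).symm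
    rw [Finset.sum_congr rfl (fun k _ => e1 k),
      ← Summable.tsum_finsetSum (fun k _ => Summable.mul_left _ (exp_summable (μ k * x)))]
    apply tsum_congr
    intro r
    rw [Sdd, Finset.mul_sum]
    apply Finset.sum_congr rfl
    intro k _
    rw [mul_pow]
    ring
  -- step 2 : reindex using the divided difference identity
  have h2 : (∑' (r : ℕ), ((n ! : ℂ) * (x:ℂ)^r / (r ! : ℂ)) * Sdd r μ)
      = ∑' (d : ℕ), c d * hc d Lμ := by
    have hsupp : Function.support (fun r : ℕ => ((n ! : ℂ) * (x:ℂ)^r / (r ! : ℂ)) * Sdd r μ)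
        ⊆ Set.range (fun d : ℕ => n + d) := by
      intro r hr
      by_contra hcon
      apply hr
      have hrn : ¬ n ≤ r := fun h => hcon ⟨r - n, by simpa using Nat.add_sub_cancel' h⟩
      simp only [Sdd_eq_hc n μ hμ r, if_neg hrn, mul_zero]
    rw [← Function.Injective.tsum_eq (add_right_injective n) hsupp]
    apply tsum_congr
    intro d
    rw [Sdd_eq_hc n μ hμ (n+d), if_pos (Nat.le_add_right n d), Nat.add_sub_cancel_left,
      hcdef, hLμ]
  -- step 3 : the target as a power series
  have h3 : (x:ℂ)^n * Complex.exp (Λ * x) = ∑' (d : ℕ), c d * hc d LΛ := by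
    rw [exp_tsum (Λ * x), ← tsum_mul_left]
    apply tsum_congr
    intro d
    rw [hLΛ, hc_replicate Λ d n]
    show (x:ℂ)^n * ((Λ * (x:ℂ))^d / ((d ! : ℕ) : ℂ))
        = ((n ! : ℂ) * (x:ℂ)^(n+d) / (((n+d)! : ℕ) : ℂ)) * (((d+n).choose n : ℂ) * Λ^d)
    have hnat : ((d+n).choose n : ℂ) * (n ! : ℂ) * (d ! : ℂ) = (((d+n)! : ℕ) : ℂ) := by
      have h0 := Nat.choose_mul_factorial_mul_factorial (Nat.le_add_left n d)
      have h1 : d + n - n = d := by omega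
      rw [h1] at h0
      exact_mod_cast congrArg (Nat.cast (R := ℂ)) h0
    have hcomm : n + d = d + n := add_comm n d
    rw [hcomm, mul_pow, pow_add]
    have hd0 : (d ! : ℂ) ≠ 0 := Nat.cast_ne_zero.2 (Nat.factorial_ne_zero d)
    have hnd0 : (((d+n)! : ℕ) : ℂ) ≠ 0 := Nat.cast_ne_zero.2 (Nat.factorial_ne_zero _)
    field_simp
    linear_combination (-1 : ℂ) * (x:ℂ)^n * (x:ℂ)^d * Λ^d * hnat
  -- put everything together
  rw [h1, h2, h3, ← Summable.tsum_sub hSuμ hSuΛ]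
  refine (norm_tsum_le_tsum_norm hnorms).trans ?_
  refine (Summable.tsum_le_tsum hterm hnorms hW).trans ?_
  rw [tsum_mul_left, tsum_mul_left, ← hKdef]
  have hKK : K ≤ K + 1 := by linarith
  exact mul_le_mul_of_nonneg_left hKK hε.le

/-- The L² norm on the interval `[-π, π]`: `‖g‖ = (∫_{-π}^{π} |g(x)|² dx)^{1/2}`. -/
noncomputable def L2norm (g : ℝ → ℂ) : ℝ :=
  Real.sqrt (∫ x in Set.Icc (-Real.pi) Real.pi, ‖g x‖ ^ 2)


lemma L2norm_le_of_bound (g : ℝ → ℂ) (hg : Continuous g) (s : ℝ) (hs : 0 ≤ s)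
    (h : ∀ x ∈ Set.Icc (-Real.pi) Real.pi, ‖g x‖ ≤ s) :
    L2norm g ≤ s * Real.sqrt (2 * Real.pi) := by
  have hpi := Real.pi_pos
  rw [L2norm]
  have hint : (∫ x in Set.Icc (-Real.pi) Real.pi, ‖g x‖^2)
      ≤ ∫ _x in Set.Icc (-Real.pi) Real.pi, s^2 := by
    apply setIntegral_mono_on
    · exact (hg.norm.pow 2).integrableOn_Icc
    · exact integrableOn_const measure_Icc_lt_top.ne
    · exact measurableSet_Icc
    · intro x hx
      exact pow_le_pow_left₀ (norm_nonneg _) (h x hx) 2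
  have h2 : (∫ _x in Set.Icc (-Real.pi) Real.pi, s^2) = (2*Real.pi) * s^2 := by
    rw [setIntegral_const, Real.volume_real_Icc_of_le (by linarith), smul_eq_mul]
    ring
  refine (Real.sqrt_le_sqrt (hint.trans_eq h2)).trans ?_
  have h3 : (2*Real.pi) * s^2 = (s * Real.sqrt (2*Real.pi))^2 := by
    rw [mul_pow, Real.sq_sqrt (by linarith)]
    ring
  rw [h3, Real.sqrt_sq (by positivity)]

/-- Theorem 4.2: fix cluster limits `Λ₁, …, Λ_m` (mutually distinct) and
multiplicities `k₁, …, k_m ≥ 1`. For every `δ > 0` there is `ε₀ > 0` such that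
whenever the `λ_{ij}` are mutually distinct with `|λ_{ij} − Λᵢ| < ε₀`, there are
functions `f_{ij}` in the span of the exponentials `e^{λ_{ij} x}` with
`‖f_{ij}(x) − x^{j−1} e^{Λᵢ x}‖_{L²([-π,π])} < δ` for all `i, j`
(indices `j` shifted so `j : Fin kᵢ` corresponds to the monomial `x^j`). -/

theorem stmt15 (m : ℕ) (hm : 1 ≤ m) (k : Fin m → ℕ) (hk : ∀ i, 1 ≤ k i)
    (Λ : Fin m → ℂ) (hΛ : Function.Injective Λ) :
    ∀ δ > (0 : ℝ), ∃ ε₀ > (0 : ℝ),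
      ∀ lam : (Σ i : Fin m, Fin (k i)) → ℂ, Function.Injective lam →
      (∀ p : Σ i : Fin m, Fin (k i), ‖lam p - Λ p.1‖ < ε₀) →
      ∃ f : (Σ i : Fin m, Fin (k i)) → (ℝ → ℂ),
        (∀ p, f p ∈ Submodule.span ℂ
          (Set.range fun p' : Σ i : Fin m, Fin (k i) =>
            fun x : ℝ => Complex.exp (lam p' * x))) ∧
        ∀ p : Σ i : Fin m, Fin (k i),
          L2norm (fun x : ℝ =>
            f p x - (x : ℂ) ^ (p.2 : ℕ) * Complex.exp (Λ p.1 * x)) < δ := by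
  intro δ hδ
  classical
  have hpi := Real.pi_pos
  -- a constant for each index
  choose C hC using fun p : (Σ i : Fin m, Fin (k i)) => key (p.2 : ℕ) (Λ p.1)
  have hC0 : ∀ p, 0 < C p := fun p => (hC p).1
  have hCkey := fun p => (hC p).2
  -- the maximum constant
  have hne : (Finset.univ : Finset (Σ i : Fin m, Fin (k i))).Nonempty := by
    refine ⟨⟨⟨0, hm⟩, ⟨0, hk _⟩⟩, Finset.mem_univ _⟩
  set Cmax : ℝ := Finset.univ.sup' hne C with hCmaxdef
  have hCmaxpos : 0 < Cmax := lt_of_lt_of_le (hC0 hne.choose)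
    (Finset.le_sup' C (Finset.mem_univ hne.choose))
  have hCle : ∀ p, C p ≤ Cmax := fun p => Finset.le_sup' C (Finset.mem_univ p)
  set Q : ℝ := Real.sqrt (2 * Real.pi) with hQdef
  have hQ0 : 0 < Q := Real.sqrt_pos.2 (by linarith)
  refine ⟨min 1 (δ / (2 * Cmax * Q)), by positivity, ?_⟩
  intro lam hlam hclose
  set ε₀ : ℝ := min 1 (δ / (2 * Cmax * Q)) with hε₀def
  have hε₀pos : 0 < ε₀ := by positivity
  have hε₀1 : ε₀ ≤ 1 := min_le_left _ _
  have hε₀2 : ε₀ ≤ δ / (2 * Cmax * Q) := min_le_right _ _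
  -- node functions
  refine ⟨fun p => fun x => ∑ t : Fin ((p.2 : ℕ)+1),
    (((p.2 : ℕ) ! : ℂ) * cf (fun u => lam ⟨p.1, Fin.castLE p.2.isLt u⟩) t)
      * Complex.exp (lam ⟨p.1, Fin.castLE p.2.isLt t⟩ * x), ?_, ?_⟩
  · -- span membership
    intro p
    dsimp only
    have heq : (fun x : ℝ => ∑ t : Fin ((p.2 : ℕ)+1),
        (((p.2 : ℕ) ! : ℂ) * cf (fun u => lam ⟨p.1, Fin.castLE p.2.isLt u⟩) t)
          * Complex.exp (lam ⟨p.1, Fin.castLE p.2.isLt t⟩ * x))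
        = ∑ t : Fin ((p.2 : ℕ)+1),
        (((p.2 : ℕ) ! : ℂ) * cf (fun u => lam ⟨p.1, Fin.castLE p.2.isLt u⟩) t)
          • (fun x : ℝ => Complex.exp (lam ⟨p.1, Fin.castLE p.2.isLt t⟩ * x)) := by
      funext x
      simp [Finset.sum_apply]
    rw [heq]
    refine Submodule.sum_mem _ (fun t _ => Submodule.smul_mem _ _ ?_)
    exact Submodule.subset_span ⟨⟨p.1, Fin.castLE p.2.isLt t⟩, rfl⟩
  · -- the L² estimate
    intro p
    set n : ℕ := (p.2 : ℕ) with hn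
    set μ : Fin (n+1) → ℂ := fun u => lam ⟨p.1, Fin.castLE p.2.isLt u⟩ with hμdef
    have hμinj : Function.Injective μ := by
      intro a b hab
      have h2 := hlam hab
      rw [Sigma.mk.inj_iff] at h2
      have h3 := eq_of_heq h2.2
      exact Fin.castLE_injective _ h3
    have hμcl : ∀ u, ‖μ u - Λ p.1‖ ≤ ε₀ := by
      intro u
      have := hclose ⟨p.1, Fin.castLE p.2.isLt u⟩
      exact this.le
    have hbd := hCkey p ε₀ hε₀pos hε₀1 μ hμinj hμcl
    -- continuity of the function
    have hcont : Continuous (fun x : ℝ =>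
        (∑ t : Fin (n+1), ((n ! : ℂ) * cf μ t) * Complex.exp (μ t * x))
          - (x:ℂ)^n * Complex.exp (Λ p.1 * x)) := by
      apply Continuous.sub
      · apply continuous_finset_sum
        intro t _
        exact continuous_const.mul (Complex.continuous_exp.comp
          (continuous_const.mul Complex.continuous_ofReal))
      · exact ((Complex.continuous_ofReal.pow n).mul (Complex.continuous_exp.comp
          (continuous_const.mul Complex.continuous_ofReal)))
    have hL2 : L2norm (fun x : ℝ =>
        (∑ t : Fin (n+1), ((n ! : ℂ) * cf μ t) * Complex.exp (μ t * x))
          - (x:ℂ)^n * Complex.exp (Λ p.1 * x)) ≤ (ε₀ * C p) * Q := by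
      refine L2norm_le_of_bound _ hcont _ (mul_nonneg hε₀pos.le (hC0 p).le) ?_
      intro x hx
      have hxpi : |x| ≤ Real.pi := abs_le.2 ⟨hx.1, hx.2⟩
      exact hbd x hxpi
    refine lt_of_le_of_lt hL2 ?_
    have h4 : (ε₀ * C p) * Q ≤ (δ / (2 * Cmax * Q)) * Cmax * Q := by
      have h5 : ε₀ * C p ≤ (δ / (2 * Cmax * Q)) * Cmax :=
        mul_le_mul hε₀2 (hCle p) (hC0 p).le (by positivity)
      exact mul_le_mul_of_nonneg_right h5 hQ0.le
    refine lt_of_le_of_lt h4 ?_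
    have h6 : δ / (2 * Cmax * Q) * Cmax * Q = δ / 2 := by
      field_simp
    rw [h6]
    linarith
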